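/- The subgroup W of F ⋊ Ψ generated by the elements s_ω = x_ω ψ_ω, together with the set S = {s_ω : ω ∈ Ω}, forms a right-angled Coxeter system: all relations among the s_ω are consequences of s_ω² = 1 and s_{ω₁}s_{ω₂} = s_{ω₂}s_{ω₁} for comparable ω₁, ω₂. Equivalently, the natural homomorphism from the abstract right-angled Coxeter group on generators r_ω (with relations r_ω² = 1 and r_{ω₁}r_{ω₂} = r_{ω₂}r_{ω₁} whenever ω₁ < ω₂) to F ⋊ Ψ sending r_ω to s_ω is injective. -/

import Mathlib

open scoped Classical

def sqRels (Ω : Type) : Set (FreeGroup Ω) := Set.range (fun ω : Ω => FreeGroup.of ω ^ 2)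

/-- `FP Ω` is the free product of copies of `ℤ/2` indexed by `Ω`. -/
abbrev FP (Ω : Type) := PresentedGroup (sqRels Ω)

def xg {Ω : Type} (ω : Ω) : FP Ω := PresentedGroup.of ω

/-- The automorphism `ψ_ω` is determined by `ψ_ω(x_γ) = x_ω x_γ x_ω` if `γ < ω`
and `ψ_ω(x_γ) = x_γ` otherwise. -/
def IsPsiAut {Ω : Type} [PartialOrder Ω] (ω : Ω) (ψ : MulAut (FP Ω)) : Prop :=
  ∀ γ : Ω, ψ (xg γ) = if γ < ω then xg ω * xg γ * xg ω else xg γ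

/-- The semidirect product `F ⋊ Aut(F)` for the tautological action. -/
abbrev GP (Ω : Type) : Type :=
  SemidirectProduct (FP Ω) (MulAut (FP Ω)) (MonoidHom.id (MulAut (FP Ω)))

/-- The element `s_ω = x_ω · ψ_ω` of the semidirect product. -/
def sElt {Ω : Type} (ω : Ω) (ψ : MulAut (FP Ω)) : GP Ω := ⟨xg ω, ψ⟩

/-- The relations of the abstract right-angled Coxeter group on generators `r_ω`,
`ω ∈ Ω`: `r_ω² = 1`, and `r_{ω₁}` and `r_{ω₂}` commute whenever `ω₁ < ω₂`. -/
def racgRels (Ω : Type) [PartialOrder Ω] : Set (FreeGroup Ω) :=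
  Set.range (fun ω : Ω => FreeGroup.of ω ^ 2) ∪
    {w | ∃ ω₁ ω₂ : Ω, ω₁ < ω₂ ∧
      w = FreeGroup.of ω₁ * FreeGroup.of ω₂ * (FreeGroup.of ω₁)⁻¹ * (FreeGroup.of ω₂)⁻¹}

/-- The abstract right-angled Coxeter group associated with the poset `Ω`. -/
abbrev RACG (Ω : Type) [PartialOrder Ω] := PresentedGroup (racgRels Ω)

section Aux

variable {Ω : Type} [PartialOrder Ω]

omit [PartialOrder Ω] in
lemma rel_eq_one {rels : Set (FreeGroup Ω)} {r : FreeGroup Ω} (h : r ∈ rels) :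
    PresentedGroup.mk rels r = 1 :=
  (QuotientGroup.eq_one_iff r).mpr (Subgroup.subset_normalClosure h)

lemma racg_sq (ω : Ω) : (PresentedGroup.of ω : RACG Ω) ^ 2 = 1 := by
  have h : (FreeGroup.of ω ^ 2) ∈ racgRels Ω := Or.inl ⟨ω, rfl⟩
  simpa [PresentedGroup.of] using rel_eq_one h

lemma racg_comm {ω₁ ω₂ : Ω} (h : ω₁ < ω₂) :
    (PresentedGroup.of ω₁ : RACG Ω) * PresentedGroup.of ω₂ =
      PresentedGroup.of ω₂ * PresentedGroup.of ω₁ := by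
  have hm : (FreeGroup.of ω₁ * FreeGroup.of ω₂ * (FreeGroup.of ω₁)⁻¹ * (FreeGroup.of ω₂)⁻¹)
      ∈ racgRels Ω := Or.inr ⟨ω₁, ω₂, h, rfl⟩
  open scoped commutatorElement in
  have h2 : ⁅(PresentedGroup.of ω₁ : RACG Ω), PresentedGroup.of ω₂⁆ = (1 : RACG Ω) := by
    have := rel_eq_one hm
    simp only [map_mul, map_inv] at this
    exact this
  exact commutatorElement_eq_one_iff_mul_comm.mp h2

/-- The retraction `F → W` sending `x_ω ↦ r_ω`. -/
def pHom (Ω : Type) [PartialOrder Ω] : FP Ω →* RACG Ω :=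
  PresentedGroup.toGroup (f := fun ω => (PresentedGroup.of ω : RACG Ω))
    (by rintro r ⟨ω, rfl⟩; simp [racg_sq])

@[simp] lemma pHom_xg (ω : Ω) : pHom Ω (xg ω) = PresentedGroup.of ω :=
  PresentedGroup.toGroup.of _

lemma racg_conj {γ ω : Ω} (h : γ < ω) :
    (PresentedGroup.of ω : RACG Ω) * PresentedGroup.of γ * PresentedGroup.of ω =
      PresentedGroup.of γ := by
  rw [← racg_comm h, mul_assoc, ← sq, racg_sq, mul_one]

lemma pHom_psi {ω : Ω} {ψ : MulAut (FP Ω)} (hψ : IsPsiAut ω ψ) (f : FP Ω) :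
    pHom Ω (ψ f) = pHom Ω f := by
  have : (pHom Ω).comp ψ.toMonoidHom = pHom Ω := by
    apply PresentedGroup.ext
    intro γ
    simp only [MonoidHom.comp_apply, MulEquiv.coe_toMonoidHom]
    rw [show (PresentedGroup.of γ : FP Ω) = xg γ from rfl, hψ γ]
    by_cases hlt : γ < ω
    · simp [hlt, racg_conj hlt]
    · simp [hlt]
  exact DFunLike.congr_fun this f

end Aux

/-- `(W, S)` is a right-angled Coxeter system: the natural homomorphism from the abstract
right-angled Coxeter group (generators `r_ω` with relations `r_ω² = 1` and commutation of
`r_{ω₁}, r_{ω₂}` for comparable `ω₁, ω₂`) to `F ⋊ Ψ` sending `r_ω ↦ s_ω = x_ω ψ_ω`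
is injective. -/
theorem racg_to_W_injective (Ω : Type) [PartialOrder Ω] [Fintype Ω]
    (ψA : Ω → MulAut (FP Ω)) (hψ : ∀ ω, IsPsiAut ω (ψA ω))
    (φ : RACG Ω →* GP Ω) (hφ : ∀ ω : Ω, φ (PresentedGroup.of ω) = sElt ω (ψA ω)) :
    Function.Injective φ := by
  set P : RACG Ω → Prop :=
    fun g => pHom Ω (φ g).left = g ∧ ∀ f : FP Ω, pHom Ω ((φ g).right f) = pHom Ω f with hP
  have hall : ∀ g : RACG Ω, P g := by
    intro g
    have hg : g ∈ Subgroup.closure (Set.range (PresentedGroup.of : Ω → RACG Ω)) := by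
      rw [PresentedGroup.closure_range_of]; trivial
    refine Subgroup.closure_induction ?_ ?_ ?_ ?_ hg
    · rintro _ ⟨ω, rfl⟩
      constructor
      · rw [hφ ω]; simp [sElt]
      · intro f
        rw [hφ ω]
        exact pHom_psi (hψ ω) f
    · constructor <;> simp
    · rintro a b _ _ ⟨ha1, ha2⟩ ⟨hb1, hb2⟩
      constructor
      · rw [map_mul, SemidirectProduct.mul_left, map_mul, ha1, MonoidHom.id_apply, ha2, hb1]
      · intro f
        rw [map_mul, SemidirectProduct.mul_right]
        change pHom Ω ((φ a).right ((φ b).right f)) = _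
        rw [ha2, hb2]
    · rintro a _ ⟨ha1, ha2⟩
      have ha2' : ∀ f : FP Ω, pHom Ω ((φ a).right⁻¹ f) = pHom Ω f := by
        intro f
        conv_rhs => rw [show f = (φ a).right ((φ a).right⁻¹ f) by simp]
        rw [ha2]
      constructor
      · rw [map_inv, SemidirectProduct.inv_left, MonoidHom.id_apply, ha2', map_inv, ha1]
      · intro f
        rw [map_inv, SemidirectProduct.inv_right]
        exact ha2' f
  intro a b hab
  have := (hall a).1
  rw [hab, (hall b).1] at this
  exact this.symm
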